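/- For the Gauss hypergeometric function with c = 1, Euler's identity holds as an identity of formal power series: ₂F₁(a, b; 1 | z) = (1-z)^{1-a-b} · ₂F₁(1-a, 1-b; 1 | z), where (1-z)^{1-a-b} is the formal binomial series. -/

import Mathlib

open PowerSeries

/-- The Gauss hypergeometric series `₂F₁(a,b;1|z) = Σ_k (a)_k (b)_k / (k!)² z^k`. -/
noncomputable def gaussHyp (a b : ℚ) : PowerSeries ℚ :=
  PowerSeries.mk fun k =>
    (ascPochhammer ℚ k).eval a * (ascPochhammer ℚ k).eval b / ((k.factorial : ℚ)) ^ 2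

/-- The formal binomial series `(1-z)^{-s} = Σ_k (s)_k / k! z^k`. -/
noncomputable def binomSeries (s : ℚ) : PowerSeries ℚ :=
  PowerSeries.mk fun k => (ascPochhammer ℚ k).eval s / (k.factorial : ℚ)

namespace EulerAux

/-- `(c)_i / i!` with `c = a+b-1`. -/
noncomputable def P (a b : ℚ) (i : ℕ) : ℚ :=
  (ascPochhammer ℚ i).eval (a + b - 1) / (i.factorial : ℚ)

/-- `(1-a)_j (1-b)_j / (j!)²`. -/
noncomputable def U (a b : ℚ) (j : ℕ) : ℚ :=
  (ascPochhammer ℚ j).eval (1 - a) * (ascPochhammer ℚ j).eval (1 - b) /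
    ((j.factorial : ℚ)) ^ 2

/-- The summand of the Cauchy product. -/
noncomputable def B (a b : ℚ) (i j : ℕ) : ℚ := P a b i * U a b j

lemma fact_ne (m : ℕ) : ((m.factorial : ℚ)) ≠ 0 := by
  exact_mod_cast m.factorial_ne_zero

lemma P_succ (a b : ℚ) (i : ℕ) :
    P a b (i + 1) = P a b i * (a + b - 1 + i) / (i + 1) := by
  have hi : ((i : ℚ) + 1) ≠ 0 := by positivity
  have hf := fact_ne i
  unfold P
  rw [ascPochhammer_succ_eval, Nat.factorial_succ, Nat.cast_mul]
  push_cast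
  field_simp

lemma U_succ (a b : ℚ) (j : ℕ) :
    U a b (j + 1) = U a b j * ((1 - a + j) * (1 - b + j)) / ((j : ℚ) + 1) ^ 2 := by
  have hj : ((j : ℚ) + 1) ≠ 0 := by positivity
  have hf := fact_ne j
  unfold U
  rw [ascPochhammer_succ_eval, ascPochhammer_succ_eval, Nat.factorial_succ, Nat.cast_mul]
  push_cast
  field_simp

/-- The WZ-certificate identity (★):
`((i+j+1)² - j²) B(i+1,j) = (i+j+a)(i+j+b) B(i,j) - (j+1)² B(i,j+1)`. -/
lemma key (a b : ℚ) (i j : ℕ) :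
    (((i : ℚ) + j + 1) ^ 2 - (j : ℚ) ^ 2) * B a b (i + 1) j =
      ((i : ℚ) + j + a) * ((i : ℚ) + j + b) * B a b i j
        - ((j : ℚ) + 1) ^ 2 * B a b i (j + 1) := by
  unfold B
  rw [P_succ, U_succ]
  have hi : ((i : ℚ) + 1) ≠ 0 := by positivity
  have hj : ((j : ℚ) + 1) ≠ 0 := by positivity
  field_simp
  ring

/-- Coefficient of the Cauchy product `binomSeries (a+b-1) * gaussHyp (1-a) (1-b)`. -/
noncomputable def d (a b : ℚ) (n : ℕ) : ℚ :=
  ∑ p ∈ Finset.HasAntidiagonal.antidiagonal n, B a b p.1 p.2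

/-- Coefficient of `gaussHyp a b`. -/
noncomputable def c (a b : ℚ) (n : ℕ) : ℚ :=
  (ascPochhammer ℚ n).eval a * (ascPochhammer ℚ n).eval b / ((n.factorial : ℚ)) ^ 2

lemma c_rec (a b : ℚ) (n : ℕ) :
    ((n : ℚ) + 1) ^ 2 * c a b (n + 1) = ((n : ℚ) + a) * ((n : ℚ) + b) * c a b n := by
  have hn : ((n : ℚ) + 1) ≠ 0 := by positivity
  have hf := fact_ne n
  unfold c
  rw [ascPochhammer_succ_eval, ascPochhammer_succ_eval, Nat.factorial_succ, Nat.cast_mul]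
  push_cast
  field_simp
  ring

lemma d_rec (a b : ℚ) (n : ℕ) :
    ((n : ℚ) + 1) ^ 2 * d a b (n + 1) = ((n : ℚ) + a) * ((n : ℚ) + b) * d a b n := by
  unfold d
  rw [Finset.Nat.sum_antidiagonal_succ, mul_add, Finset.mul_sum, Finset.mul_sum]
  -- rewrite n as p.1 + p.2 inside the sum
  have hsub : ∀ f : ℕ × ℕ → ℕ → ℚ,
      (∑ p ∈ Finset.HasAntidiagonal.antidiagonal n, f p n) =
        ∑ p ∈ Finset.HasAntidiagonal.antidiagonal n, f p (p.1 + p.2) := fun f =>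
    Finset.sum_congr rfl fun p hp => by rw [Finset.HasAntidiagonal.mem_antidiagonal.mp hp]
  have h1 : (∑ p ∈ Finset.HasAntidiagonal.antidiagonal n, ((n : ℚ) + 1) ^ 2 * B a b (p.1 + 1) p.2) =
      ∑ p ∈ Finset.HasAntidiagonal.antidiagonal n,
        (((p.1 : ℚ) + p.2 + 1) ^ 2 * B a b (p.1 + 1) p.2) := by
    refine Finset.sum_congr rfl fun p hp => ?_
    have := Finset.HasAntidiagonal.mem_antidiagonal.mp hp
    subst this
    push_cast
    ring
  rw [h1]
  have h2 : (∑ p ∈ Finset.HasAntidiagonal.antidiagonal n,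
      (((p.1 : ℚ) + p.2 + 1) ^ 2 * B a b (p.1 + 1) p.2)) =
      ∑ p ∈ Finset.HasAntidiagonal.antidiagonal n,
        ((((p.1 : ℚ) + p.2 + a) * ((p.1 : ℚ) + p.2 + b) * B a b p.1 p.2
          - ((p.2 : ℚ) + 1) ^ 2 * B a b p.1 (p.2 + 1))
          + (p.2 : ℚ) ^ 2 * B a b (p.1 + 1) p.2) := by
    refine Finset.sum_congr rfl fun p hp => ?_
    have hk := key a b p.1 p.2
    linarith [hk]
  rw [h2]
  rw [Finset.sum_add_distrib, Finset.sum_sub_distrib]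
  -- Σ (j+1)² B(i,j+1) over ad n = Σ_{ad(n+1)} j² B(i,j)  (the (n+1,0) term vanishes)
  have h3 : (∑ p ∈ Finset.HasAntidiagonal.antidiagonal n, ((p.2 : ℚ) + 1) ^ 2 * B a b p.1 (p.2 + 1)) =
      ∑ p ∈ Finset.HasAntidiagonal.antidiagonal (n + 1), (p.2 : ℚ) ^ 2 * B a b p.1 p.2 := by
    rw [Finset.Nat.sum_antidiagonal_succ' (f := fun p => (p.2 : ℚ) ^ 2 * B a b p.1 p.2)]
    push_cast
    simp
  -- Σ_{ad n} j² B(i+1,j) = Σ_{ad(n+1)} j² B(i,j) - (n+1)² B(0,n+1)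
  have h4 : (∑ p ∈ Finset.HasAntidiagonal.antidiagonal n, (p.2 : ℚ) ^ 2 * B a b (p.1 + 1) p.2) =
      (∑ p ∈ Finset.HasAntidiagonal.antidiagonal (n + 1), (p.2 : ℚ) ^ 2 * B a b p.1 p.2)
        - ((n : ℚ) + 1) ^ 2 * B a b 0 (n + 1) := by
    rw [Finset.Nat.sum_antidiagonal_succ (f := fun p => (p.2 : ℚ) ^ 2 * B a b p.1 p.2)]
    push_cast
    ring
  rw [h3, h4]
  have h5 : (∑ p ∈ Finset.HasAntidiagonal.antidiagonal n,
      ((p.1 : ℚ) + p.2 + a) * ((p.1 : ℚ) + p.2 + b) * B a b p.1 p.2) =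
      ∑ p ∈ Finset.HasAntidiagonal.antidiagonal n,
        ((n : ℚ) + a) * ((n : ℚ) + b) * B a b p.1 p.2 := by
    refine Finset.sum_congr rfl fun p hp => ?_
    have := Finset.HasAntidiagonal.mem_antidiagonal.mp hp
    subst this
    push_cast
    ring
  rw [h5]
  ring

lemma c_eq_d (a b : ℚ) : ∀ n, c a b n = d a b n := by
  intro n
  induction n with
  | zero =>
    unfold c d B P U
    simp [ascPochhammer_zero]
  | succ n ih =>
    have hc := c_rec a b n
    have hd := d_rec a b n
    have hne : ((n : ℚ) + 1) ^ 2 ≠ 0 := by positivity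
    have : ((n : ℚ) + 1) ^ 2 * c a b (n + 1) = ((n : ℚ) + 1) ^ 2 * d a b (n + 1) := by
      rw [hc, hd, ih]
    exact mul_left_cancel₀ hne this

end EulerAux

/-- Euler's identity for the Gauss hypergeometric function with `c = 1`, as an
identity of formal power series:
`₂F₁(a,b;1|z) = (1-z)^{1-a-b} · ₂F₁(1-a,1-b;1|z)`, where
`(1-z)^{1-a-b} = (1-z)^{-(a+b-1)}` is the formal binomial series. -/
theorem euler_identity (a b : ℚ) :
    gaussHyp a b = binomSeries (a + b - 1) * gaussHyp (1 - a) (1 - b) := by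
  ext n
  rw [PowerSeries.coeff_mul]
  have h := EulerAux.c_eq_d a b n
  unfold EulerAux.c EulerAux.d EulerAux.B EulerAux.P EulerAux.U at h
  simpa [gaussHyp, binomSeries, div_mul_div_comm] using h
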